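/- Let p(q) = I + α q + (1/2)β q² + s q³ with s ≠ 0. If p has two distinct real roots Q₁, Q₂ at which the quartic ℋ(q) = I q + (1/2)α q² + (1/6)β q³ + (s/4)q⁴ takes the same value, then (1/12)β² − s α ≥ 0. -/
import Mathlib

/-- Root-reality condition: if the cubic `I + α q + ½β q² + s q³` has two distinct real
roots at which the quartic potential takes the same value, then `β²/12 − sα ≥ 0`. -/
theorem root_reality_condition
    (α β s I Q₁ Q₂ : ℝ) (hs : s ≠ 0) (hne : Q₁ ≠ Q₂)
    (h1 : I + α*Q₁ + (1/2)*β*Q₁^2 + s*Q₁^3 = 0)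
    (h2 : I + α*Q₂ + (1/2)*β*Q₂^2 + s*Q₂^3 = 0)
    (h3 : I*Q₁ + (1/2)*α*Q₁^2 + (1/6)*β*Q₁^3 + (s/4)*Q₁^4
        = I*Q₂ + (1/2)*α*Q₂^2 + (1/6)*β*Q₂^3 + (s/4)*Q₂^4) :
    (1/12)*β^2 - s*α ≥ 0 := by
  have hd : Q₁ - Q₂ ≠ 0 := sub_ne_zero.mpr hne
  have hfac : (Q₁ - Q₂) * (α + (1/2)*β*(Q₁+Q₂) + s*(Q₁^2 + Q₁*Q₂ + Q₂^2)) = 0 := by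
    linear_combination h1 - h2
  have key : α + (1/2)*β*(Q₁+Q₂) + s*(Q₁^2 + Q₁*Q₂ + Q₂^2) = 0 :=
    (mul_eq_zero.mp hfac).resolve_left hd
  have keys : s*(α + (1/2)*β*(Q₁+Q₂) + s*(Q₁^2 + Q₁*Q₂ + Q₂^2)) = 0 := by
    rw [key]; ring
  nlinarith [keys, sq_nonneg (β + 3*s*(Q₁+Q₂)), sq_nonneg (s*(Q₁-Q₂))]
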